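/- arXiv:math/0405152 — 2 statements merged into one kernel-verified Lean document; each statement's English description precedes it below -/
import Mathlib

section
/- Under the contraction assumption ($|f(z',v)-f(z'',v)|\le\varrho|z'-z''|$, $\varrho<1$, and integrability $E|\xi_1|<\infty$, $E|X_0|<\infty$), the Markov chain $X_n=f(X_{n-1},\xi_n)$ has at most one invariant probability measure: if $\mu$ and $\mu'$ are both invariant probability measures with finite first moment, then $\mu=\mu'$. -/
open MeasureTheory ProbabilityTheory Set
open scoped ENNReal NNReal Topology

lemma thickAux_lip {α : Type*} [PseudoEMetricSpace α] {δ : ℝ} (F : Set α) (x y : α) :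
    thickenedIndicatorAux δ F x ≤ thickenedIndicatorAux δ F y + edist x y / ENNReal.ofReal δ := by
  have key : EMetric.infEdist y F ≤ EMetric.infEdist x F + edist y x :=
    EMetric.infEdist_le_infEdist_add_edist
  have hdiv : EMetric.infEdist y F / ENNReal.ofReal δ ≤
      EMetric.infEdist x F / ENNReal.ofReal δ + edist y x / ENNReal.ofReal δ := by
    rw [← ENNReal.add_div]
    exact ENNReal.div_le_div_right key _
  simp only [thickenedIndicatorAux]
  calc (1 : ℝ≥0∞) - EMetric.infEdist x F / ENNReal.ofReal δ
      ≤ 1 - (EMetric.infEdist y F / ENNReal.ofReal δ - edist y x / ENNReal.ofReal δ) :=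
        tsub_le_tsub_left (tsub_le_iff_right.mpr hdiv) 1
    _ ≤ (1 - EMetric.infEdist y F / ENNReal.ofReal δ) + edist y x / ENNReal.ofReal δ :=
        tsub_tsub_le_tsub_add
    _ = (1 - EMetric.infEdist y F / ENNReal.ofReal δ) + edist x y / ENNReal.ofReal δ := by
        rw [edist_comm]

theorem stmt2 {d p : ℕ}
    (f : (Fin d → ℝ) → (Fin p → ℝ) → (Fin d → ℝ)) (ϱ : ℝ) (hϱ : ϱ < 1)
    (hf : ∀ z' z'' v, ‖f z' v - f z'' v‖ ≤ ϱ * ‖z' - z''‖)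
    (hfm : Measurable (Function.uncurry f))
    (ν : Measure (Fin p → ℝ)) [IsProbabilityMeasure ν]
    (hν : ∫⁻ v, ‖v‖₊ ∂ν < ⊤)
    (μ μ' : Measure (Fin d → ℝ)) [IsProbabilityMeasure μ] [IsProbabilityMeasure μ']
    (hμ1 : ∫⁻ z, ‖z‖₊ ∂μ < ⊤) (hμ'1 : ∫⁻ z, ‖z‖₊ ∂μ' < ⊤)
    (hinv : (μ.prod ν).map (fun q => f q.1 q.2) = μ)
    (hinv' : (μ'.prod ν).map (fun q => f q.1 q.2) = μ') :
    μ = μ' := by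
  obtain ⟨ρ, hρ0, hρ1, hfρ⟩ :
      ∃ ρ : ℝ, 0 ≤ ρ ∧ ρ < 1 ∧ ∀ z' z'' v, ‖f z' v - f z'' v‖ ≤ ρ * ‖z' - z''‖ :=
    ⟨max ϱ 0, le_max_right _ _, max_lt hϱ one_pos, fun z' z'' v =>
      (hf z' z'' v).trans (mul_le_mul_of_nonneg_right (le_max_left _ _) (norm_nonneg _))⟩
  set r : ℝ≥0∞ := ENNReal.ofReal ρ with hr
  have hr1 : r < 1 := by
    rw [hr, ← ENNReal.ofReal_one]
    exact (ENNReal.ofReal_lt_ofReal_iff one_pos).mpr hρ1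
  set g0 : ((Fin d → ℝ) × (Fin d → ℝ)) → ℝ≥0∞ := fun q => (‖q.1 - q.2‖₊ : ℝ≥0∞) with hg0def
  have hg0 : Measurable g0 := (measurable_fst.sub measurable_snd).nnnorm.coe_nnreal_ennreal
  have hfm' : Measurable (fun q : (Fin d → ℝ) × (Fin p → ℝ) => f q.1 q.2) := hfm
  set T : ((Fin d → ℝ) × (Fin d → ℝ)) × (Fin p → ℝ) → (Fin d → ℝ) × (Fin d → ℝ) :=
    fun q => (f q.1.1 q.2, f q.1.2 q.2) with hTdef
  have hT : Measurable T := by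
    apply Measurable.prodMk
    · exact hfm.comp ((measurable_fst.comp measurable_fst).prodMk measurable_snd)
    · exact hfm.comp ((measurable_snd.comp measurable_fst).prodMk measurable_snd)
  set π : ℕ → Measure ((Fin d → ℝ) × (Fin d → ℝ)) :=
    fun n => (fun m => (m.prod ν).map T)^[n] (μ.prod μ') with hπ
  have hπ0 : π 0 = μ.prod μ' := rfl
  have hπs : ∀ n, π (n + 1) = ((π n).prod ν).map T := fun n =>
    Function.iterate_succ_apply' (fun m => (m.prod ν).map T) n (μ.prod μ')
  set C : ℝ≥0∞ := ∫⁻ q, g0 q ∂(μ.prod μ') with hC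
  have hCfin : C < ⊤ := by
    have hb : C ≤ (∫⁻ z, (‖z‖₊ : ℝ≥0∞) ∂μ) + ∫⁻ z, (‖z‖₊ : ℝ≥0∞) ∂μ' := by
      calc C ≤ ∫⁻ q, ((‖q.1‖₊ : ℝ≥0∞) + (‖q.2‖₊ : ℝ≥0∞)) ∂(μ.prod μ') := by
            apply lintegral_mono
            intro q
            simp only [hg0def]
            exact_mod_cast nnnorm_sub_le q.1 q.2
        _ = (∫⁻ q, (‖q.1‖₊ : ℝ≥0∞) ∂(μ.prod μ')) + ∫⁻ q, (‖q.2‖₊ : ℝ≥0∞) ∂(μ.prod μ') :=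
            lintegral_add_left (measurable_fst.nnnorm.coe_nnreal_ennreal) _
        _ = (∫⁻ z, (‖z‖₊ : ℝ≥0∞) ∂μ) + ∫⁻ z, (‖z‖₊ : ℝ≥0∞) ∂μ' := by
            congr 1
            · rw [← lintegral_map measurable_nnnorm.coe_nnreal_ennreal measurable_fst,
                Measure.map_fst_prod, measure_univ, one_smul]
            · rw [← lintegral_map measurable_nnnorm.coe_nnreal_ennreal measurable_snd,
                Measure.map_snd_prod, measure_univ, one_smul]
    exact lt_of_le_of_lt hb (ENNReal.add_lt_top.mpr ⟨hμ1, hμ'1⟩)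
  have key : ∀ n, IsProbabilityMeasure (π n) ∧
      ((π n).map Prod.fst = μ ∧ (π n).map Prod.snd = μ') ∧
      ∫⁻ q, g0 q ∂(π n) ≤ r ^ n * C := by
    intro n
    induction n with
    | zero =>
      refine ⟨by rw [hπ0]; infer_instance, ⟨?_, ?_⟩, by simp [hπ0, hC]⟩
      · rw [hπ0, Measure.map_fst_prod, measure_univ, one_smul]
      · rw [hπ0, Measure.map_snd_prod, measure_univ, one_smul]
    | succ n ih =>
      obtain ⟨hprob, ⟨h1, h2⟩, h3⟩ := ih
      haveI := hprob
      have hprob' : IsProbabilityMeasure (π (n + 1)) := by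
        rw [hπs]
        exact Measure.isProbabilityMeasure_map hT.aemeasurable
      have hmfst : (π (n + 1)).map Prod.fst = μ := by
        calc (π (n + 1)).map Prod.fst
            = ((π n).prod ν).map (Prod.fst ∘ T) := by
              rw [hπs, Measure.map_map measurable_fst hT]
          _ = (((π n).prod ν).map (Prod.map Prod.fst id)).map (fun q => f q.1 q.2) := by
              rw [Measure.map_map hfm' (measurable_fst.prodMap measurable_id)]
              rfl
          _ = (μ.prod ν).map (fun q => f q.1 q.2) := by
              rw [← Measure.map_prod_map _ _ measurable_fst measurable_id, Measure.map_id, h1]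
          _ = μ := hinv
      have hmsnd : (π (n + 1)).map Prod.snd = μ' := by
        calc (π (n + 1)).map Prod.snd
            = ((π n).prod ν).map (Prod.snd ∘ T) := by
              rw [hπs, Measure.map_map measurable_snd hT]
          _ = (((π n).prod ν).map (Prod.map Prod.snd id)).map (fun q => f q.1 q.2) := by
              rw [Measure.map_map hfm' (measurable_snd.prodMap measurable_id)]
              rfl
          _ = (μ'.prod ν).map (fun q => f q.1 q.2) := by
              rw [← Measure.map_prod_map _ _ measurable_snd measurable_id, Measure.map_id, h2]
          _ = μ' := hinv'
      refine ⟨hprob', ⟨hmfst, hmsnd⟩, ?_⟩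
      have hmono : ∀ q, g0 (T q) ≤ r * g0 q.1 := by
        intro q
        calc g0 (T q) = ENNReal.ofReal ‖f q.1.1 q.2 - f q.1.2 q.2‖ :=
              (ofReal_norm _).symm
          _ ≤ ENNReal.ofReal (ρ * ‖q.1.1 - q.1.2‖) := ENNReal.ofReal_le_ofReal (hfρ _ _ _)
          _ = r * g0 q.1 := by
              rw [ENNReal.ofReal_mul hρ0]; exact congrArg _ (ofReal_norm _)
      calc ∫⁻ q, g0 q ∂(π (n + 1)) = ∫⁻ q, g0 (T q) ∂((π n).prod ν) := by
            rw [hπs, lintegral_map hg0 hT]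
        _ ≤ ∫⁻ q, r * g0 q.1 ∂((π n).prod ν) := lintegral_mono hmono
        _ = r * ∫⁻ q, g0 q.1 ∂((π n).prod ν) := lintegral_const_mul r (hg0.comp measurable_fst)
        _ = r * ∫⁻ q, g0 q ∂(((π n).prod ν).map Prod.fst) := by
            rw [lintegral_map hg0 measurable_fst]
        _ = r * ∫⁻ q, g0 q ∂(π n) := by
            rw [Measure.map_fst_prod, measure_univ, one_smul]
        _ ≤ r * (r ^ n * C) := mul_le_mul_right h3 r
        _ = r ^ (n + 1) * C := by ring
  have hten : Filter.Tendsto (fun n => r ^ n * C) Filter.atTop (𝓝 0) := by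
    have h1 := ENNReal.tendsto_pow_atTop_nhds_zero_of_lt_one hr1
    have h2 := ENNReal.Tendsto.mul_const h1 (Or.inr hCfin.ne)
    simpa using h2
  have main : ∀ g : (Fin d → ℝ) → ℝ≥0∞, Measurable g → (∀ x, g x ≤ 1) →
      ∀ K : ℝ≥0∞, K ≠ ⊤ → (∀ x y, g x ≤ g y + K * (‖x - y‖₊ : ℝ≥0∞)) →
      ∫⁻ x, g x ∂μ = ∫⁻ x, g x ∂μ' := by
    intro g hg hgb K hK hlip
    have hlim : Filter.Tendsto (fun n => ∫⁻ x, g x ∂μ' + K * (r ^ n * C)) Filter.atTop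
        (𝓝 (∫⁻ x, g x ∂μ')) := by
      have h2 := ENNReal.Tendsto.const_mul hten (Or.inr hK)
      have h3 := Filter.Tendsto.const_add (∫⁻ x, g x ∂μ') h2
      simpa using h3
    have hlim' : Filter.Tendsto (fun n => ∫⁻ x, g x ∂μ + K * (r ^ n * C)) Filter.atTop
        (𝓝 (∫⁻ x, g x ∂μ)) := by
      have h2 := ENNReal.Tendsto.const_mul hten (Or.inr hK)
      have h3 := Filter.Tendsto.const_add (∫⁻ x, g x ∂μ) h2
      simpa using h3
    have le1 : ∫⁻ x, g x ∂μ ≤ ∫⁻ x, g x ∂μ' := by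
      refine ge_of_tendsto' hlim fun n => ?_
      obtain ⟨hprob, ⟨h1, h2⟩, h3⟩ := key n
      haveI := hprob
      calc ∫⁻ x, g x ∂μ = ∫⁻ q, g q.1 ∂(π n) := by
            rw [← h1, lintegral_map hg measurable_fst]
        _ ≤ ∫⁻ q, (g q.2 + K * g0 q) ∂(π n) := lintegral_mono fun q => hlip q.1 q.2
        _ = (∫⁻ q, g q.2 ∂(π n)) + K * ∫⁻ q, g0 q ∂(π n) := by
            rw [lintegral_add_left (show Measurable fun q : (Fin d → ℝ) × (Fin d → ℝ) => g q.2 from hg.comp measurable_snd), lintegral_const_mul K hg0]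
        _ = (∫⁻ x, g x ∂μ') + K * ∫⁻ q, g0 q ∂(π n) := by
            rw [← h2, lintegral_map hg measurable_snd]
        _ ≤ ∫⁻ x, g x ∂μ' + K * (r ^ n * C) := add_le_add_right (mul_le_mul_right h3 K) _
    have le2 : ∫⁻ x, g x ∂μ' ≤ ∫⁻ x, g x ∂μ := by
      refine ge_of_tendsto' hlim' fun n => ?_
      obtain ⟨hprob, ⟨h1, h2⟩, h3⟩ := key n
      haveI := hprob
      calc ∫⁻ x, g x ∂μ' = ∫⁻ q, g q.2 ∂(π n) := by
            rw [← h2, lintegral_map hg measurable_snd]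
        _ ≤ ∫⁻ q, (g q.1 + K * g0 q) ∂(π n) := by
            apply lintegral_mono
            intro q
            have h := hlip q.2 q.1
            rw [show ‖q.2 - q.1‖₊ = ‖q.1 - q.2‖₊ by rw [← neg_sub, nnnorm_neg]] at h
            exact h
        _ = (∫⁻ q, g q.1 ∂(π n)) + K * ∫⁻ q, g0 q ∂(π n) := by
            rw [lintegral_add_left (show Measurable fun q : (Fin d → ℝ) × (Fin d → ℝ) => g q.1 from hg.comp measurable_fst), lintegral_const_mul K hg0]
        _ = (∫⁻ x, g x ∂μ) + K * ∫⁻ q, g0 q ∂(π n) := by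
            rw [← h1, lintegral_map hg measurable_fst]
        _ ≤ ∫⁻ x, g x ∂μ + K * (r ^ n * C) := add_le_add_right (mul_le_mul_right h3 K) _
    exact le_antisymm le1 le2
  have closed_eq : ∀ F : Set (Fin d → ℝ), IsClosed F → μ F = μ' F := by
    intro F hF
    have heq : ∀ δ : ℝ, 0 < δ →
        ∫⁻ x, thickenedIndicatorAux δ F x ∂μ = ∫⁻ x, thickenedIndicatorAux δ F x ∂μ' := by
      intro δ hδ
      refine main _ (continuous_thickenedIndicatorAux hδ F).measurable
        (fun x => thickenedIndicatorAux_le_one δ F x) (ENNReal.ofReal δ)⁻¹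
        (ENNReal.inv_ne_top.mpr (ENNReal.ofReal_pos.mpr hδ).ne') ?_
      intro x y
      have h := thickAux_lip F x y (δ := δ)
      rwa [edist_eq_enorm_sub, ENNReal.div_eq_inv_mul] at h
    have hcoe : ∀ (δ : ℝ) (hδ : 0 < δ) (x : Fin d → ℝ),
        ((thickenedIndicator hδ F x : ℝ≥0) : ℝ≥0∞) = thickenedIndicatorAux δ F x := by
      intro δ hδ x
      rw [thickenedIndicator.coeFn_eq_comp]
      exact ENNReal.coe_toNNReal
        (lt_of_le_of_lt (thickenedIndicatorAux_le_one δ F x) ENNReal.one_lt_top).ne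
    have t1 := tendsto_lintegral_thickenedIndicator_of_isClosed μ hF
      (δs := fun n : ℕ => (1 : ℝ) / (n + 1)) (fun n => Nat.one_div_pos_of_nat)
      tendsto_one_div_add_atTop_nhds_zero_nat
    have t2 := tendsto_lintegral_thickenedIndicator_of_isClosed μ' hF
      (δs := fun n : ℕ => (1 : ℝ) / (n + 1)) (fun n => Nat.one_div_pos_of_nat)
      tendsto_one_div_add_atTop_nhds_zero_nat
    have hsame : (fun n : ℕ => ∫⁻ ω, ((thickenedIndicator (Nat.one_div_pos_of_nat (n := n)) F ω :
        ℝ≥0) : ℝ≥0∞) ∂μ) = fun n : ℕ =>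
        ∫⁻ ω, ((thickenedIndicator (Nat.one_div_pos_of_nat (n := n)) F ω : ℝ≥0) : ℝ≥0∞) ∂μ' := by
      funext n
      simp_rw [hcoe _ (Nat.one_div_pos_of_nat (n := n))]
      exact heq _ (Nat.one_div_pos_of_nat)
    rw [hsame] at t1
    exact tendsto_nhds_unique t1 t2
  refine ext_of_generate_finite {s : Set (Fin d → ℝ) | IsClosed s} ?_ isPiSystem_isClosed
    (fun s hs => closed_eq s hs) (by simp)
  rw [BorelSpace.measurable_eq (α := Fin d → ℝ), borel_eq_generateFrom_isClosed]
end

section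
/- Let $B$ be a symmetric positive semidefinite $d\times d$ real matrix with Moore–Penrose pseudoinverse $B^\oplus$, and for $\beta>0$ set $I_\beta(y) = \frac{1}{2} y^*(\beta I + B)^{-1} y$. Then as $\beta\to0$: if $B^\oplus B y = y$ then $I_\beta(y) \to \frac{1}{2} y^* B^\oplus y$, while if $B^\oplus B y \ne y$ then $I_\beta(y) \to \infty$. -/
open Filter Set Matrix

private lemma posdef_aux {d : ℕ} {B : Matrix (Fin d) (Fin d) ℝ} (hB : B.PosSemidef)
    {β : ℝ} (hβ : 0 < β) : (β • (1 : Matrix (Fin d) (Fin d) ℝ) + B).PosDef := by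
  refine Matrix.PosDef.add_posSemidef (PosDef.of_dotProduct_mulVec_pos (by simp [Matrix.IsHermitian]) fun x hx => ?_) hB
  rw [smul_mulVec, one_mulVec, dotProduct_smul]
  exact smul_pos hβ (dotProduct_star_self_pos_iff.mpr hx)

private lemma dsym {d : ℕ} {N : Matrix (Fin d) (Fin d) ℝ} (hN : Nᵀ = N)
    (v w : Fin d → ℝ) : v ⬝ᵥ N.mulVec w = N.mulVec v ⬝ᵥ w := by
  rw [dotProduct_mulVec, ← Matrix.mulVec_transpose, hN]

theorem stmt13 {d : ℕ} (B Bp : Matrix (Fin d) (Fin d) ℝ)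
    (hB : B.PosSemidef)
    (h1 : B * Bp * B = B) (h2 : Bp * B * Bp = Bp)
    (h3 : (B * Bp)ᵀ = B * Bp) (h4 : (Bp * B)ᵀ = Bp * B)
    (y : Fin d → ℝ) :
    (Bp.mulVec (B.mulVec y) = y →
      Tendsto (fun β : ℝ =>
          (1 / 2) * (y ⬝ᵥ ((β • (1 : Matrix (Fin d) (Fin d) ℝ) + B)⁻¹).mulVec y))
        (nhdsWithin 0 (Set.Ioi 0)) (nhds ((1 / 2) * (y ⬝ᵥ Bp.mulVec y)))) ∧
    (Bp.mulVec (B.mulVec y) ≠ y →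
      Tendsto (fun β : ℝ =>
          (1 / 2) * (y ⬝ᵥ ((β • (1 : Matrix (Fin d) (Fin d) ℝ) + B)⁻¹).mulVec y))
        (nhdsWithin 0 (Set.Ioi 0)) atTop) := by
  have hBt : Bᵀ = B := (by simpa using hB.1 : B.IsSymm)
  have hBnn : ∀ v : Fin d → ℝ, 0 ≤ v ⬝ᵥ B.mulVec v := fun v => by simpa using hB.dotProduct_mulVec_nonneg v
  -- Basic facts about M = (β•1+B)⁻¹ for β > 0
  have setup : ∀ β : ℝ, 0 < β →
      (∀ v : Fin d → ℝ,
        β • (((β • (1 : Matrix (Fin d) (Fin d) ℝ) + B)⁻¹).mulVec v)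
          + B.mulVec (((β • (1 : Matrix (Fin d) (Fin d) ℝ) + B)⁻¹).mulVec v) = v)
      ∧ ((β • (1 : Matrix (Fin d) (Fin d) ℝ) + B)⁻¹)ᵀ
          = (β • (1 : Matrix (Fin d) (Fin d) ℝ) + B)⁻¹
      ∧ (∀ v : Fin d → ℝ,
          0 ≤ v ⬝ᵥ ((β • (1 : Matrix (Fin d) (Fin d) ℝ) + B)⁻¹).mulVec v)
      ∧ (∀ v : Fin d → ℝ,
          ((β • (1 : Matrix (Fin d) (Fin d) ℝ) + B)⁻¹).mulVec
            ((β • (1 : Matrix (Fin d) (Fin d) ℝ) + B).mulVec v) = v) := by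
    intro β hβ
    set A : Matrix (Fin d) (Fin d) ℝ := β • (1 : Matrix (Fin d) (Fin d) ℝ) + B with hA
    have hApd : A.PosDef := posdef_aux hB hβ
    have hdet : IsUnit A.det := hApd.det_pos.ne'.isUnit
    have hAM : A * A⁻¹ = 1 := Matrix.mul_nonsing_inv A hdet
    have hMA : A⁻¹ * A = 1 := Matrix.nonsing_inv_mul A hdet
    refine ⟨fun v => ?_, ?_, fun v => by simpa using hApd.inv.posSemidef.dotProduct_mulVec_nonneg v,
      fun v => by rw [Matrix.mulVec_mulVec, hMA, one_mulVec]⟩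
    · have : A.mulVec (A⁻¹.mulVec v) = v := by
        rw [Matrix.mulVec_mulVec, hAM, one_mulVec]
      calc β • A⁻¹.mulVec v + B.mulVec (A⁻¹.mulVec v)
          = (β • (1 : Matrix (Fin d) (Fin d) ℝ)).mulVec (A⁻¹.mulVec v)
            + B.mulVec (A⁻¹.mulVec v) := by
            rw [smul_mulVec, one_mulVec]
        _ = A.mulVec (A⁻¹.mulVec v) := by rw [hA, add_mulVec]
        _ = v := this
    · have hAt : Aᵀ = A := by
        rw [hA, transpose_add, transpose_smul, transpose_one, hBt]
      rw [Matrix.transpose_nonsing_inv, hAt]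
  constructor
  · -- Convergence case
    intro hy
    set z : Fin d → ℝ := Bpᵀ.mulVec y with hz
    have hyBz : B.mulVec z = y := by
      calc B.mulVec z = (Bᵀ * Bpᵀ).mulVec y := by
            rw [hz, ← Matrix.mulVec_mulVec, hBt]
        _ = (Bp * B)ᵀ.mulVec y := by rw [Matrix.transpose_mul]
        _ = (Bp * B).mulVec y := by rw [h4]
        _ = y := by rw [← Matrix.mulVec_mulVec]; exact hy
    have hzy : z ⬝ᵥ y = y ⬝ᵥ Bp.mulVec y := by
      rw [dotProduct_mulVec, ← Matrix.mulVec_transpose, hz, dotProduct_comm]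
    -- bounds for the quadratic form
    have key : ∀ β : ℝ, 0 < β →
        (1 / 2) * (z ⬝ᵥ y) - ((1 / 2) * (z ⬝ᵥ z)) * β
          ≤ (1 / 2) * (y ⬝ᵥ ((β • (1 : Matrix (Fin d) (Fin d) ℝ) + B)⁻¹).mulVec y)
        ∧ (1 / 2) * (y ⬝ᵥ ((β • (1 : Matrix (Fin d) (Fin d) ℝ) + B)⁻¹).mulVec y)
          ≤ (1 / 2) * (z ⬝ᵥ y) := by
      intro β hβ
      obtain ⟨hrel, hMt, _, _⟩ := setup β hβ
      set M : Matrix (Fin d) (Fin d) ℝ := (β • (1 : Matrix (Fin d) (Fin d) ℝ) + B)⁻¹ with hM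
      set u : Fin d → ℝ := M.mulVec y with hu
      set v : Fin d → ℝ := M.mulVec z with hv
      have hurel : β • u + B.mulVec u = y := hrel y
      have hvrel : β • v + B.mulVec v = z := hrel z
      -- Q = z⬝y - β * (z⬝u)
      have hQ : y ⬝ᵥ u = z ⬝ᵥ y - β * (z ⬝ᵥ u) := by
        have h5 : y ⬝ᵥ u = z ⬝ᵥ B.mulVec u := by
          rw [← hyBz, dsym hBt]
        have h6 : B.mulVec u = y - β • u := by
          rw [← hurel]; abel
        rw [h5, h6, dotProduct_sub, dotProduct_smul, smul_eq_mul]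
      -- z⬝u = v⬝(B z) = β (v⬝Bv) + (Bv)⬝(Bv) ≥ 0
      have hzu1 : z ⬝ᵥ u = v ⬝ᵥ B.mulVec z := by
        rw [hu, dsym hMt, ← hv, ← hyBz]
      have hzBz : B.mulVec z = β • B.mulVec v + B.mulVec (B.mulVec v) := by
        conv_lhs => rw [← hvrel]
        rw [Matrix.mulVec_add, Matrix.mulVec_smul]
      have hzu_nonneg : 0 ≤ z ⬝ᵥ u := by
        rw [hzu1, hzBz, dotProduct_add, dotProduct_smul, smul_eq_mul,
          dsym hBt v (B.mulVec v)]
        have := hBnn v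
        have h7 : 0 ≤ B.mulVec v ⬝ᵥ B.mulVec v := by
          have := dotProduct_star_self_nonneg (B.mulVec v)
          simpa using this
        nlinarith
      -- z⬝u ≤ z⬝z : z⬝u = z⬝z - β*(v⬝z), v⬝z ≥ 0
      have hvz_nonneg : 0 ≤ v ⬝ᵥ z := by
        conv_rhs => rw [← hvrel]
        rw [dotProduct_add, dotProduct_smul, smul_eq_mul]
        have h8 : 0 ≤ v ⬝ᵥ v := by simpa using dotProduct_star_self_nonneg v
        nlinarith [hBnn v]
      have hzu_le : z ⬝ᵥ u ≤ z ⬝ᵥ z := by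
        have h9 : z ⬝ᵥ u = z ⬝ᵥ z - β * (v ⬝ᵥ z) := by
          rw [hzu1, dsym hBt v z]
          have h10 : B.mulVec v = z - β • v := by rw [← hvrel]; abel
          rw [h10, sub_dotProduct, smul_dotProduct, smul_eq_mul, dotProduct_comm v z]
        nlinarith
      constructor
      · rw [hQ]; nlinarith
      · rw [hQ]; nlinarith
    rw [show (1 / 2) * (y ⬝ᵥ Bp.mulVec y) = (1 / 2) * (z ⬝ᵥ y) by rw [hzy]]
    have hlow : Tendsto (fun β : ℝ => (1 / 2) * (z ⬝ᵥ y) - ((1 / 2) * (z ⬝ᵥ z)) * β)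
        (nhdsWithin 0 (Set.Ioi 0)) (nhds ((1 / 2) * (z ⬝ᵥ y))) := by
      have : Tendsto (fun β : ℝ => (1 / 2) * (z ⬝ᵥ y) - ((1 / 2) * (z ⬝ᵥ z)) * β)
          (nhds 0) (nhds ((1 / 2) * (z ⬝ᵥ y) - ((1 / 2) * (z ⬝ᵥ z)) * 0)) := by
        exact (tendsto_const_nhds.sub (tendsto_const_nhds.mul tendsto_id))
      simpa using this.mono_left nhdsWithin_le_nhds
    refine tendsto_of_tendsto_of_tendsto_of_le_of_le' hlow tendsto_const_nhds ?_ ?_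
    · filter_upwards [self_mem_nhdsWithin] with β hβ
      exact (key β hβ).1
    · filter_upwards [self_mem_nhdsWithin] with β hβ
      exact (key β hβ).2
  · -- Divergence case
    intro hy
    set p : Fin d → ℝ := (Bp * B).mulVec y with hp
    set w : Fin d → ℝ := y - p with hw
    have hyp : y = p + w := by rw [hw]; abel
    have hwne : w ≠ 0 := by
      rw [hw, hp, sub_ne_zero]
      intro h
      exact hy (by rw [Matrix.mulVec_mulVec]; exact h.symm)
    have hww : 0 < w ⬝ᵥ w := by simpa using dotProduct_star_self_pos_iff.mpr hwne
    have hBw : B.mulVec w = 0 := by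
      rw [hw, Matrix.mulVec_sub, hp, Matrix.mulVec_mulVec, ← Matrix.mul_assoc, h1, sub_self]
    have hpw : p ⬝ᵥ w = 0 := by
      have hPP : (Bp * B) * (Bp * B) = Bp * B := by
        calc (Bp * B) * (Bp * B) = (Bp * B * Bp) * B := by noncomm_ring
          _ = Bp * B := by rw [h2]
      have hpp : p ⬝ᵥ p = y ⬝ᵥ p := by
        rw [hp, dsym h4 ((Bp * B).mulVec y) y, Matrix.mulVec_mulVec, hPP, dotProduct_comm]
      rw [hw, dotProduct_sub, hpp, dotProduct_comm, sub_self]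
    have key : ∀ β : ℝ, 0 < β →
        ((1 / 2) * (w ⬝ᵥ w)) * β⁻¹
          ≤ (1 / 2) * (y ⬝ᵥ ((β • (1 : Matrix (Fin d) (Fin d) ℝ) + B)⁻¹).mulVec y) := by
      intro β hβ
      obtain ⟨hrel, hMt, hMnn, hinv⟩ := setup β hβ
      set M : Matrix (Fin d) (Fin d) ℝ := (β • (1 : Matrix (Fin d) (Fin d) ℝ) + B)⁻¹ with hM
      have hMw : M.mulVec w = β⁻¹ • w := by
        have h11 : (β • (1 : Matrix (Fin d) (Fin d) ℝ) + B).mulVec w = β • w := by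
          rw [add_mulVec, smul_mulVec, one_mulVec, hBw, add_zero]
        have h12 := hinv w
        rw [h11, Matrix.mulVec_smul] at h12
        calc M.mulVec w = β⁻¹ • (β • M.mulVec w) := by
              rw [smul_smul, inv_mul_cancel₀ hβ.ne', one_smul]
          _ = β⁻¹ • w := by rw [h12]
      have hcross1 : p ⬝ᵥ M.mulVec w = 0 := by
        rw [hMw, dotProduct_smul, smul_eq_mul, hpw, mul_zero]
      have hcross2 : w ⬝ᵥ M.mulVec p = 0 := by
        rw [dsym hMt, hMw, smul_dotProduct, smul_eq_mul, dotProduct_comm w p, hpw, mul_zero]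
      have hlast : w ⬝ᵥ M.mulVec w = β⁻¹ * (w ⬝ᵥ w) := by
        rw [hMw, dotProduct_smul, smul_eq_mul]
      have hexp : y ⬝ᵥ M.mulVec y = p ⬝ᵥ M.mulVec p + β⁻¹ * (w ⬝ᵥ w) := by
        conv_lhs => rw [hyp]
        rw [Matrix.mulVec_add, dotProduct_add, add_dotProduct, add_dotProduct,
          hcross1, hcross2, hlast]
        ring
      rw [hexp]
      have := hMnn p
      have hβi : 0 < β⁻¹ := inv_pos.mpr hβ
      nlinarith
    have hdiv : Tendsto (fun β : ℝ => ((1 / 2) * (w ⬝ᵥ w)) * β⁻¹)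
        (nhdsWithin 0 (Set.Ioi 0)) atTop :=
      Tendsto.const_mul_atTop (by positivity) tendsto_inv_nhdsGT_zero
    refine tendsto_atTop_mono' _ ?_ hdiv
    filter_upwards [self_mem_nhdsWithin] with β hβ
    exact key β hβ
end
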